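/- (Theorem 1, upper bound for exact DPO-Unif.) Suppose θ^(0) = 0 and the parameters evolve by the exact DPO-Unif update with learning rate η = 1/(β²A): θ^(t+1)_a = θ^(t)_a + (4/(βA)) Σ_{a'∈𝒴} Δ(a,a';θ^(t)) for every a ∈ 𝒴. Then for every number of iterations T ∈ ℕ and all a, a' ∈ 𝒴, |δ(a,a';θ^(T))| ≤ 0.588^T. -/

import Mathlib

/-- The sigmoid function. -/
noncomputable def sig (x : ℝ) : ℝ := 1 / (1 + Real.exp (-x))

noncomputable def Lc : ℝ := Real.exp 2 / (1 + Real.exp 2) ^ 2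

lemma exp_two_bounds : 7.389 < Real.exp 2 ∧ Real.exp 2 < 7.3891 := by
  have h2 : Real.exp 2 = Real.exp 1 * Real.exp 1 := by
    rw [← Real.exp_add]; norm_num
  have h1 := Real.exp_one_gt_d9
  have h1' := Real.exp_one_lt_d9
  constructor <;> nlinarith [Real.exp_pos 1]

lemma Lc_lb : (0.103 : ℝ) ≤ Lc := by
  obtain ⟨h1, h2⟩ := exp_two_bounds
  rw [Lc, le_div_iff₀ (by positivity)]
  nlinarith

lemma Lc_ub : Lc ≤ 1/4 := by
  have h := Real.exp_pos 2
  rw [Lc, div_le_iff₀ (by positivity)]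
  nlinarith [sq_nonneg (1 - Real.exp 2)]

lemma sig_deriv (x : ℝ) : HasDerivAt sig (sig x * (1 - sig x)) x := by
  have h : HasDerivAt (fun y : ℝ => 1 + Real.exp (-y)) (-Real.exp (-x)) x := by
    have h1 : HasDerivAt (fun y : ℝ => Real.exp (-y)) (-Real.exp (-x)) x := by
      convert (hasDerivAt_neg x).exp using 1; ring
    simpa using h1.const_add 1
  have h0 : (1 + Real.exp (-x)) ≠ 0 := by positivity
  have h2 := h.inv h0
  have h3 : HasDerivAt sig (-(-Real.exp (-x)) / (1 + Real.exp (-x)) ^ 2) x := by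
    have : sig = fun y : ℝ => (1 + Real.exp (-y))⁻¹ := by
      funext y; simp [sig, one_div]
    rw [this]
    exact h2
  convert h3 using 1
  have hp : (0:ℝ) < 1 + Real.exp (-x) := by positivity
  simp only [sig]
  field_simp
  ring

lemma sigder_exp (x : ℝ) : sig x * (1 - sig x) = Real.exp x / (1 + Real.exp x) ^ 2 := by
  have h1 : Real.exp (-x) = 1 / Real.exp x := by rw [Real.exp_neg]; ring
  have hp : (0:ℝ) < Real.exp x := Real.exp_pos x
  simp only [sig, h1]
  field_simp
  ring

lemma sigder_le (x : ℝ) : sig x * (1 - sig x) ≤ 1/4 := by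
  nlinarith [sq_nonneg (sig x - 1/2)]

lemma sigder_ge {x : ℝ} (hx : |x| ≤ 2) : Lc ≤ sig x * (1 - sig x) := by
  rw [sigder_exp, Lc]
  obtain ⟨hl, hu⟩ := abs_le.1 hx
  set t := Real.exp x with ht
  set s := Real.exp 2 with hs
  have hts : t ≤ s := Real.exp_le_exp.2 hu
  have hst1 : 1 ≤ s * t := by
    have : s * t = Real.exp (2 + x) := by rw [hs, ht, ← Real.exp_add]
    rw [this]
    exact Real.one_le_exp (by linarith)
  have htp : (0:ℝ) < t := Real.exp_pos x
  have hsp : (0:ℝ) < s := Real.exp_pos 2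
  rw [div_le_div_iff₀ (by positivity) (by positivity)]
  nlinarith [mul_nonneg (sub_nonneg.2 hts) (by linarith : (0:ℝ) ≤ s * t - 1)]

lemma sig_slope_aux {y x : ℝ} (h : y < x) (hx : |x| ≤ 2) (hy : |y| ≤ 2) :
    ∃ c, Lc ≤ c ∧ c ≤ 1/4 ∧ sig x - sig y = c * (x - y) := by
  have hcont : ContinuousOn sig (Set.Icc y x) :=
    (Differentiable.continuous (fun z => (sig_deriv z).differentiableAt)).continuousOn
  obtain ⟨c, hc, hceq⟩ := exists_hasDerivAt_eq_slope sig (fun z => sig z * (1 - sig z)) h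
    hcont (fun z _ => sig_deriv z)
  have hc2 : |c| ≤ 2 := by
    rw [abs_le]
    obtain ⟨h1, h2⟩ := hc
    constructor <;> [linarith [(abs_le.1 hy).1]; linarith [(abs_le.1 hx).2]]
  refine ⟨sig c * (1 - sig c), sigder_ge hc2, sigder_le c, ?_⟩
  rw [hceq, div_mul_cancel₀ _ (by intro hxy; exact absurd (by linarith : x = y) (ne_of_gt h) : x - y ≠ 0)]

lemma sig_slope {x y : ℝ} (hx : |x| ≤ 2) (hy : |y| ≤ 2) :
    ∃ c, Lc ≤ c ∧ c ≤ 1/4 ∧ sig x - sig y = c * (x - y) := by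
  rcases lt_trichotomy x y with h | h | h
  · obtain ⟨c, h1, h2, h3⟩ := sig_slope_aux h hy hx
    exact ⟨c, h1, h2, by linarith [h3]⟩
  · exact ⟨1/4, Lc_ub, le_refl _, by rw [h]; ring⟩
  · exact sig_slope_aux h hx hy

/-- **Theorem 1 (Upper bound of DPO-Unif).**
Under tabular softmax parametrization with uniform reference policy,
rewards in `[0,1]`, initialization `θ⁰ = 0`, and the exact DPO-Unif
gradient update with learning rate `η = 1/(β²A)`, the reward-gap errors
`δ(a,a';θ^T)` converge linearly: `|δ(a,a';θ^T)| ≤ 0.588^T`. -/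
theorem dpo_unif_linear_convergence
    {Y : Type*} [Fintype Y] [Nonempty Y]
    (A : ℕ) (hA : A = Fintype.card Y)
    (r : Y → ℝ) (hr : ∀ a, 0 ≤ r a ∧ r a ≤ 1)
    (β : ℝ) (hβ : 0 < β)
    (θ : ℕ → Y → ℝ) (hθ0 : θ 0 = 0)
    (hupd : ∀ t a, θ (t + 1) a = θ t a +
      (4 / (β * A)) * ∑ a' : Y, (sig (r a - r a') - sig (β * (θ t a - θ t a')))) :
    ∀ (T : ℕ) (a a' : Y),
      |r a - r a' - β * (θ T a - θ T a')| ≤ (0.588 : ℝ) ^ T := by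
  classical
  intro T
  induction T with
  | zero =>
    intro a a'
    simp only [hθ0, Pi.zero_apply, sub_zero, mul_zero, pow_zero]
    rw [abs_le]
    constructor <;> [linarith [(hr a).1, (hr a').2]; linarith [(hr a).2, (hr a').1]]
  | succ t ih =>
    have hA1 : 1 ≤ A := by rw [hA]; exact Fintype.card_pos
    have hApos : (0:ℝ) < (A:ℝ) := by exact_mod_cast Nat.lt_of_lt_of_le Nat.zero_lt_one hA1
    set g : Y → ℝ := fun b => r b - β * θ t b with hg
    have hgdiff : ∀ p q : Y, r p - r q - β * (θ t p - θ t q) = g p - g q := by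
      intro p q; simp only [hg]; ring
    have ihg : ∀ p q : Y, |g p - g q| ≤ (0.588:ℝ)^t := by
      intro p q; rw [← hgdiff]; exact ih p q
    have hDle1 : (0.588:ℝ)^t ≤ 1 := pow_le_one₀ (by norm_num) (by norm_num)
    have hslope : ∀ p q : Y, ∃ cc, Lc ≤ cc ∧ cc ≤ 1/4 ∧
        sig (r p - r q) - sig (β * (θ t p - θ t q)) = cc * (g p - g q) := by
      intro p q
      have hx1 : |r p - r q| ≤ 1 := by
        rw [abs_le]
        constructor <;> [linarith [(hr p).1, (hr q).2]; linarith [(hr p).2, (hr q).1]]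
      have hx : |r p - r q| ≤ 2 := hx1.trans (by norm_num)
      have hy : |β * (θ t p - θ t q)| ≤ 2 := by
        have h1 := ihg p q
        have h2 : β * (θ t p - θ t q) = (r p - r q) - (g p - g q) := by
          rw [← hgdiff]; ring
        rw [h2]
        calc |(r p - r q) - (g p - g q)| ≤ |r p - r q| + |g p - g q| := abs_sub _ _
          _ ≤ 2 := by linarith
      obtain ⟨c, h1, h2, h3⟩ := sig_slope hx hy
      exact ⟨c, h1, h2, by rw [h3, hgdiff]⟩
    choose c hcL hcU hceq using hslope
    have key : ∀ p : Y, r p - β * θ (t+1) p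
        = g p - (4/(A:ℝ)) * ∑ b, c p b * (g p - g b) := by
      intro p
      rw [hupd]
      have h1 : ∑ b : Y, (sig (r p - r b) - sig (β * (θ t p - θ t b)))
          = ∑ b, c p b * (g p - g b) := Finset.sum_congr rfl (fun b _ => hceq p b)
      rw [h1]
      have hb : β ≠ 0 := ne_of_gt hβ
      have hAne : (A:ℝ) ≠ 0 := ne_of_gt hApos
      simp only [hg]
      field_simp
      ring
    set w : Y → Y → ℝ := fun p b =>
      (4/(A:ℝ)) * c p b + (if b = p then 1 - (4/(A:ℝ)) * ∑ b', c p b' else 0) with hw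
    have hrow : ∀ p : Y, ∑ b, w p b = 1 := by
      intro p
      simp only [hw]
      rw [Finset.sum_add_distrib, Finset.sum_ite_eq' Finset.univ p, ← Finset.mul_sum]
      simp only [Finset.mem_univ, if_true]
      ring
    have hwge : ∀ p b : Y, 4 * Lc / (A:ℝ) ≤ w p b := by
      intro p b
      simp only [hw]
      by_cases hbp : b = p
      · subst hbp
        simp only [if_true]
        have hsum : ∑ b', c b b' = c b b + ∑ b' ∈ Finset.univ.erase b, c b b' :=
          (Finset.add_sum_erase _ _ (Finset.mem_univ b)).symm
        have hle : ∑ b' ∈ Finset.univ.erase b, c b b' ≤ ((A:ℝ) - 1) * (1/4) := by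
          have hcard : (Finset.univ.erase b).card = A - 1 := by
            rw [Finset.card_erase_of_mem (Finset.mem_univ b), Finset.card_univ, hA]
          calc ∑ b' ∈ Finset.univ.erase b, c b b'
              ≤ (Finset.univ.erase b).card • (1/4 : ℝ) :=
                Finset.sum_le_card_nsmul _ _ _ (fun x _ => hcU b x)
            _ = ((A:ℝ) - 1) * (1/4) := by
                rw [hcard, nsmul_eq_mul, Nat.cast_sub hA1, Nat.cast_one]
        have h4Lc : 4 * Lc ≤ 1 := by linarith [Lc_ub]
        rw [hsum, div_le_iff₀ hApos]
        have hAne : (A:ℝ) ≠ 0 := ne_of_gt hApos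
        have hx : (4 / (A:ℝ) * c b b + (1 - 4 / (A:ℝ) * (c b b + ∑ b' ∈ Finset.univ.erase b, c b b'))) * (A:ℝ)
            = (A:ℝ) - 4 * ∑ b' ∈ Finset.univ.erase b, c b b' := by
          field_simp
          ring
        have hA1' : (1:ℝ) ≤ (A:ℝ) := by exact_mod_cast hA1
        rw [hx]
        linarith
      · simp only [hbp, if_false, add_zero]
        rw [div_le_iff₀ hApos]
        have := hcL p b
        have h4 : (0:ℝ) < 4/(A:ℝ) := by positivity
        calc 4 * Lc ≤ 4 * c p b := by linarith
          _ = 4/(A:ℝ) * c p b * (A:ℝ) := by field_simp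
    have hF : ∀ p : Y, g p - (4/(A:ℝ)) * ∑ b, c p b * (g p - g b) = ∑ b, w p b * g b := by
      intro p
      simp only [hw, add_mul, ite_mul, zero_mul]
      rw [Finset.sum_add_distrib, Finset.sum_ite_eq' Finset.univ p]
      simp only [Finset.mem_univ, if_true]
      have h1 : ∑ b, c p b * (g p - g b) = (∑ b, c p b) * g p - ∑ b, c p b * g b := by
        rw [Finset.sum_mul, ← Finset.sum_sub_distrib]
        exact Finset.sum_congr rfl (fun b _ => by ring)
      have h2 : ∑ b, (4/(A:ℝ)) * c p b * g b = (4/(A:ℝ)) * ∑ b, c p b * g b := by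
        rw [Finset.mul_sum]
        exact Finset.sum_congr rfl (fun b _ => by ring)
      rw [h1, h2]
      ring
    have claim : ∀ p q : Y, (∑ b, w p b * g b) - (∑ b, w q b * g b)
        ≤ 0.588 * (0.588:ℝ)^t := by
      intro p q
      set u : Y → ℝ := fun b => min (w p b) (w q b) with hu
      obtain ⟨pM, _, hpM⟩ := Finset.exists_max_image Finset.univ g Finset.univ_nonempty
      obtain ⟨pm, _, hpm⟩ := Finset.exists_min_image Finset.univ g Finset.univ_nonempty
      set U : ℝ := ∑ b, u b with hU
      have hU1 : U ≤ 1 := by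
        rw [hU, ← hrow p]
        exact Finset.sum_le_sum (fun b _ => min_le_left _ _)
      have hU2 : 4 * Lc ≤ U := by
        have hs : ∑ _b : Y, (4 * Lc / (A:ℝ)) ≤ U :=
          Finset.sum_le_sum (fun b _ => le_min (hwge p b) (hwge q b))
        have hcard : ∑ _b : Y, (4 * Lc / (A:ℝ)) = (A:ℝ) * (4*Lc/(A:ℝ)) := by
          rw [Finset.sum_const, Finset.card_univ, ← hA, nsmul_eq_mul]
        rw [hcard] at hs
        have : (A:ℝ) * (4*Lc/(A:ℝ)) = 4 * Lc := by field_simp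
        linarith
      have hsp : ∑ b, (w p b - u b) = 1 - U := by
        rw [Finset.sum_sub_distrib, hrow p, ← hU]
      have hsq : ∑ b, (w q b - u b) = 1 - U := by
        rw [Finset.sum_sub_distrib, hrow q, ← hU]
      have h1 : (∑ b, (w p b - u b) * g b) ≤ (1 - U) * g pM := by
        rw [← hsp, Finset.sum_mul]
        exact Finset.sum_le_sum (fun b _ =>
          mul_le_mul_of_nonneg_left (hpM b (Finset.mem_univ b))
            (sub_nonneg.2 (min_le_left _ _)))
      have h2 : (1 - U) * g pm ≤ ∑ b, (w q b - u b) * g b := by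
        rw [← hsq, Finset.sum_mul]
        exact Finset.sum_le_sum (fun b _ =>
          mul_le_mul_of_nonneg_left (hpm b (Finset.mem_univ b))
            (sub_nonneg.2 (min_le_right _ _)))
      have hrowsub : ∀ pp : Y, ∑ b, (w pp b - u b) * g b
          = (∑ b, w pp b * g b) - ∑ b, u b * g b := by
        intro pp
        rw [← Finset.sum_sub_distrib]
        exact Finset.sum_congr rfl (fun b _ => by ring)
      have hdiff : (∑ b, w p b * g b) - (∑ b, w q b * g b)
          = (∑ b, (w p b - u b) * g b) - (∑ b, (w q b - u b) * g b) := by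
        rw [hrowsub p, hrowsub q]; ring
      have e1 : 1 - U ≤ 0.588 := by linarith [Lc_lb]
      have e2 : (0:ℝ) ≤ 1 - U := by linarith
      have e3 : g pM - g pm ≤ (0.588:ℝ)^t := le_of_abs_le (ihg pM pm)
      have e4 : (0:ℝ) ≤ g pM - g pm := sub_nonneg.2 (hpm pM (Finset.mem_univ pM))
      calc (∑ b, w p b * g b) - (∑ b, w q b * g b)
          ≤ (1 - U) * g pM - (1 - U) * g pm := by rw [hdiff]; linarith
        _ = (1 - U) * (g pM - g pm) := by ring
        _ ≤ 0.588 * (0.588:ℝ)^t := mul_le_mul e1 e3 e4 (by norm_num)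
    intro a a'
    have goal_eq : r a - r a' - β * (θ (t+1) a - θ (t+1) a')
        = (∑ b, w a b * g b) - (∑ b, w a' b * g b) := by
      have h0 : r a - r a' - β * (θ (t+1) a - θ (t+1) a')
          = (r a - β * θ (t+1) a) - (r a' - β * θ (t+1) a') := by ring
      rw [h0, key a, key a', hF a, hF a']
    rw [goal_eq, abs_sub_le_iff, pow_succ]
    exact ⟨(claim a a').trans (le_of_eq (by ring)),
           (claim a' a).trans (le_of_eq (by ring))⟩
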